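/- Let n ≥ 3 be an odd integer and set m = n − 1. On the phase space ℝ^{2m} with coordinates (q_1,…,q_m,p_1,…,p_m) and canonical Poisson bracket, define ω_j = 2 sin(jπ/n), and for 1 ≤ j ≤ (n−1)/2 define H_j = (1/2)(q_j² + p_j² + q_{n−j}² + p_{n−j}²) and u_j = q_j p_{n−j} − q_{n−j} p_j, and define the Birkhoff normal form H̄ = Σ_{j=1}^{(n−1)/2} ω_j H_j + (1/n)[ Σ_{1≤k<l≤(n−1)/2} (ω_k ω_l/4) H_k H_l + Σ_{k=1}^{(n−1)/2} (ω_k²/32)(3H_k² − u_k²) ]. Then the n functions H̄, H_1,…,H_{(n−1)/2}, u_1,…,u_{(n−1)/2} pairwise Poisson commute; in particular H̄ admits the n − 1 quadratic integrals H_j, u_j. -/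

import Mathlib

/-!
STATEMENT 0: The Birkhoff normal form of the odd periodic FPU chain is Liouville
integrable with the quadratic integrals `H_j` and `u_j`: the `n` functions
`H̄, H_1, …, H_{(n-1)/2}, u_1, …, u_{(n-1)/2}` pairwise Poisson commute.
-/

noncomputable section

/-- The phase space `ℝ^{2m}` viewed as pairs `(q, p)` with `q, p : Fin m → ℝ`. -/
abbrev Phase (m : ℕ) : Type := (Fin m → ℝ) × (Fin m → ℝ)

/-- The canonical Poisson bracket
`{F,G} = Σ_i (∂F/∂q_i ∂G/∂p_i − ∂F/∂p_i ∂G/∂q_i)` on `ℝ^{2m}`. -/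
noncomputable def poissonBracket {m : ℕ} (F G : Phase m → ℝ) : Phase m → ℝ :=
  fun x => ∑ i : Fin m,
    (fderiv ℝ F x (Pi.single i 1, 0) * fderiv ℝ G x (0, Pi.single i 1)
      - fderiv ℝ F x (0, Pi.single i 1) * fderiv ℝ G x (Pi.single i 1, 0))

/-- The coordinate `q_j` (with the 1-based convention `j = 1, …, m`). -/
def qc {m : ℕ} (j : ℕ) (x : Phase m) : ℝ :=
  if h : j - 1 < m then x.1 ⟨j - 1, h⟩ else 0

/-- The coordinate `p_j` (with the 1-based convention `j = 1, …, m`). -/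
def pc {m : ℕ} (j : ℕ) (x : Phase m) : ℝ :=
  if h : j - 1 < m then x.2 ⟨j - 1, h⟩ else 0

/-- The FPU frequencies `ω_j = 2 sin (jπ/n)`. -/
def freq (n j : ℕ) : ℝ := 2 * Real.sin (j * Real.pi / n)

/-- `H_j = (1/2)(q_j² + p_j² + q_{n-j}² + p_{n-j}²)`, the linear energy of the
two modes with wave number `j`. -/
def Hmode (n : ℕ) {m : ℕ} (j : ℕ) (x : Phase m) : ℝ :=
  (1/2) * ((qc j x)^2 + (pc j x)^2 + (qc (n-j) x)^2 + (pc (n-j) x)^2)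

/-- `u_j = q_j p_{n-j} − q_{n-j} p_j`, the angular momentum of the
two modes with wave number `j`. -/
def umode (n : ℕ) {m : ℕ} (j : ℕ) (x : Phase m) : ℝ :=
  qc j x * pc (n-j) x - qc (n-j) x * pc j x

/-- The Birkhoff normal form of the periodic FPU chain with an odd number `n`
of particles:
`H̄ = Σ_j ω_j H_j + (1/n)[ Σ_{k<l} (ω_k ω_l/4) H_k H_l + Σ_k (ω_k²/32)(3H_k² − u_k²) ]`,
the indices running through `1 ≤ j,k,l ≤ (n−1)/2`. -/
def HbarOdd (n : ℕ) {m : ℕ} (x : Phase m) : ℝ :=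
  (∑ j ∈ Finset.Icc 1 ((n-1)/2), freq n j * Hmode n j x)
  + (1/(n:ℝ)) *
    ( (∑ k ∈ Finset.Icc 1 ((n-1)/2), ∑ l ∈ Finset.Ioc k ((n-1)/2),
        (freq n k * freq n l / 4) * (Hmode n k x * Hmode n l x))
    + (∑ k ∈ Finset.Icc 1 ((n-1)/2),
        (freq n k ^ 2 / 32) * (3 * (Hmode n k x)^2 - (umode n k x)^2)) )

/-- The `n` functions `H̄, H_1, …, H_{(n-1)/2}, u_1, …, u_{(n-1)/2}` on the
phase space `ℝ^{2(n-1)}`. -/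
def oddIntegrals (n : ℕ) : Set (Phase (n-1) → ℝ) :=
  {HbarOdd n}
  ∪ (fun j => Hmode n j) '' {j : ℕ | 1 ≤ j ∧ j ≤ (n-1)/2}
  ∪ (fun j => umode n j) '' {j : ℕ | 1 ≤ j ∧ j ≤ (n-1)/2}

namespace FPUaux

/-- `qc j` as a continuous linear map. -/
def qL (m : ℕ) (j : ℕ) : Phase m →L[ℝ] ℝ :=
  if h : j - 1 < m then
    (ContinuousLinearMap.proj (⟨j-1, h⟩ : Fin m)).comp
      (ContinuousLinearMap.fst ℝ (Fin m → ℝ) (Fin m → ℝ))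
  else 0

def pL (m : ℕ) (j : ℕ) : Phase m →L[ℝ] ℝ :=
  if h : j - 1 < m then
    (ContinuousLinearMap.proj (⟨j-1, h⟩ : Fin m)).comp
      (ContinuousLinearMap.snd ℝ (Fin m → ℝ) (Fin m → ℝ))
  else 0

lemma qL_apply {m : ℕ} (j : ℕ) (v : Phase m) : qL m j v = qc j v := by
  by_cases h : j - 1 < m <;> simp [qL, qc, h]

lemma pL_apply {m : ℕ} (j : ℕ) (v : Phase m) : pL m j v = pc j v := by
  by_cases h : j - 1 < m <;> simp [pL, pc, h]

lemma hasFDerivAt_qc {m : ℕ} (j : ℕ) (x : Phase m) :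
    HasFDerivAt (qc j) (qL m j) x := by
  have h : (qc j : Phase m → ℝ) = ⇑(qL m j) := funext fun v => (qL_apply j v).symm
  rw [h]; exact (qL m j).hasFDerivAt

lemma hasFDerivAt_pc {m : ℕ} (j : ℕ) (x : Phase m) :
    HasFDerivAt (pc j) (pL m j) x := by
  have h : (pc j : Phase m → ℝ) = ⇑(pL m j) := funext fun v => (pL_apply j v).symm
  rw [h]; exact (pL m j).hasFDerivAt

lemma diff_qc {m : ℕ} (j : ℕ) : Differentiable ℝ (qc j : Phase m → ℝ) :=
  fun x => (hasFDerivAt_qc j x).differentiableAt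

lemma diff_pc {m : ℕ} (j : ℕ) : Differentiable ℝ (pc j : Phase m → ℝ) :=
  fun x => (hasFDerivAt_pc j x).differentiableAt

/-- basis-vector evaluations -/
def Ed (m : ℕ) (a : ℕ) (i : Fin m) : ℝ :=
  if h : a - 1 < m then (if (⟨a-1, h⟩ : Fin m) = i then 1 else 0) else 0

lemma qc_single {m : ℕ} (a : ℕ) (i : Fin m) :
    qc a ((Pi.single i 1, 0) : Phase m) = Ed m a i := by
  by_cases h : a - 1 < m <;> simp [qc, Ed, h, Pi.single_apply]

lemma pc_single {m : ℕ} (a : ℕ) (i : Fin m) :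
    pc a ((Pi.single i 1, 0) : Phase m) = 0 := by
  by_cases h : a - 1 < m <;> simp [pc, h]

lemma qc_single' {m : ℕ} (a : ℕ) (i : Fin m) :
    qc a ((0, Pi.single i 1) : Phase m) = 0 := by
  by_cases h : a - 1 < m <;> simp [qc, h]

lemma pc_single' {m : ℕ} (a : ℕ) (i : Fin m) :
    pc a ((0, Pi.single i 1) : Phase m) = Ed m a i := by
  by_cases h : a - 1 < m <;> simp [pc, Ed, h, Pi.single_apply]

lemma sum_Ed_mul {m : ℕ} (a b : ℕ) (ha : a - 1 < m) (hb : b - 1 < m) :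
    ∑ i : Fin m, Ed m a i * Ed m b i = if a - 1 = b - 1 then 1 else 0 := by
  simp only [Ed, dif_pos ha, dif_pos hb]
  rcases eq_or_ne (a-1) (b-1) with h | h
  · have : (⟨a-1, ha⟩ : Fin m) = ⟨b-1, hb⟩ := by simp [h]
    simp [this, h]
  · have h2 : (⟨a-1, ha⟩ : Fin m) ≠ ⟨b-1, hb⟩ := by simp [h]
    rw [if_neg h]
    apply Finset.sum_eq_zero
    intro i _
    rcases eq_or_ne (⟨a-1, ha⟩ : Fin m) i with rfl | hi
    · simp [h2.symm]
    · simp [hi]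

end FPUaux

namespace FPUaux

/-- Master pointwise computation of the Poisson bracket of two functions whose
differentials are supported on the modes `a, b` and `c, d` respectively. -/
lemma pb_point {m : ℕ} (F G : Phase m → ℝ) (x : Phase m) (a b c d : ℕ)
    (ha : a - 1 < m) (hb : b - 1 < m) (hc : c - 1 < m) (hd : d - 1 < m)
    (α1 α2 α3 α4 β1 β2 β3 β4 : ℝ)
    (hF : ∀ v, fderiv ℝ F x v = α1 * qc a v + α2 * pc a v + α3 * qc b v + α4 * pc b v)
    (hG : ∀ v, fderiv ℝ G x v = β1 * qc c v + β2 * pc c v + β3 * qc d v + β4 * pc d v) :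
    poissonBracket F G x =
      (if a-1 = c-1 then 1 else 0) * (α1*β2 - α2*β1)
      + (if a-1 = d-1 then 1 else 0) * (α1*β4 - α2*β3)
      + (if b-1 = c-1 then 1 else 0) * (α3*β2 - α4*β1)
      + (if b-1 = d-1 then 1 else 0) * (α3*β4 - α4*β3) := by
  unfold poissonBracket
  have step : ∀ i : Fin m,
      (fderiv ℝ F x (Pi.single i 1, 0) * fderiv ℝ G x (0, Pi.single i 1)
        - fderiv ℝ F x (0, Pi.single i 1) * fderiv ℝ G x (Pi.single i 1, 0))
      = (α1*β2 - α2*β1) * (Ed m a i * Ed m c i)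
        + (α1*β4 - α2*β3) * (Ed m a i * Ed m d i)
        + (α3*β2 - α4*β1) * (Ed m b i * Ed m c i)
        + (α3*β4 - α4*β3) * (Ed m b i * Ed m d i) := by
    intro i
    rw [hF, hF, hG, hG, qc_single, qc_single, qc_single, qc_single,
      pc_single, pc_single, pc_single, pc_single,
      qc_single', qc_single', qc_single', qc_single',
      pc_single', pc_single', pc_single', pc_single']
    ring
  rw [Finset.sum_congr rfl (fun i _ => step i)]
  rw [Finset.sum_add_distrib, Finset.sum_add_distrib, Finset.sum_add_distrib,
    ← Finset.mul_sum, ← Finset.mul_sum, ← Finset.mul_sum, ← Finset.mul_sum,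
    sum_Ed_mul a c ha hc, sum_Ed_mul a d ha hd, sum_Ed_mul b c hb hc,
    sum_Ed_mul b d hb hd]
  ring

lemma Hmode_eq (n : ℕ) {m : ℕ} (j : ℕ) :
    (Hmode n j : Phase m → ℝ) = fun x =>
      (1/2 : ℝ) * (qc j x * qc j x + pc j x * pc j x
        + qc (n-j) x * qc (n-j) x + pc (n-j) x * pc (n-j) x) := by
  funext x; simp only [Hmode]; ring

lemma hasFDerivAt_Hmode (n : ℕ) {m : ℕ} (j : ℕ) (x : Phase m) :
    HasFDerivAt (Hmode n j)
      ((1/2 : ℝ) • (((qc j x • qL m j + qc j x • qL m j)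
        + (pc j x • pL m j + pc j x • pL m j))
        + (qc (n-j) x • qL m (n-j) + qc (n-j) x • qL m (n-j))
        + (pc (n-j) x • pL m (n-j) + pc (n-j) x • pL m (n-j)))) x := by
  rw [Hmode_eq]
  exact (((((hasFDerivAt_qc j x).mul (hasFDerivAt_qc j x)).add
    ((hasFDerivAt_pc j x).mul (hasFDerivAt_pc j x))).add
    ((hasFDerivAt_qc (n-j) x).mul (hasFDerivAt_qc (n-j) x))).add
    ((hasFDerivAt_pc (n-j) x).mul (hasFDerivAt_pc (n-j) x))).const_mul (1/2 : ℝ)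

lemma fderiv_Hmode (n : ℕ) {m : ℕ} (j : ℕ) (x v : Phase m) :
    fderiv ℝ (Hmode n j) x v
      = qc j x * qc j v + pc j x * pc j v
        + qc (n-j) x * qc (n-j) v + pc (n-j) x * pc (n-j) v := by
  rw [(hasFDerivAt_Hmode n j x).fderiv]
  simp [ContinuousLinearMap.add_apply, ContinuousLinearMap.smul_apply,
    smul_eq_mul, qL_apply, pL_apply]
  ring

lemma hasFDerivAt_umode (n : ℕ) {m : ℕ} (j : ℕ) (x : Phase m) :
    HasFDerivAt (umode n j)
      ((qc j x • pL m (n-j) + pc (n-j) x • qL m j)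
        - (qc (n-j) x • pL m j + pc j x • qL m (n-j))) x := by
  exact ((hasFDerivAt_qc j x).mul (hasFDerivAt_pc (n-j) x)).sub
    ((hasFDerivAt_qc (n-j) x).mul (hasFDerivAt_pc j x))

lemma fderiv_umode (n : ℕ) {m : ℕ} (j : ℕ) (x v : Phase m) :
    fderiv ℝ (umode n j) x v
      = pc (n-j) x * qc j v + (-(qc (n-j) x)) * pc j v
        + (-(pc j x)) * qc (n-j) v + qc j x * pc (n-j) v := by
  rw [(hasFDerivAt_umode n j x).fderiv]
  simp [ContinuousLinearMap.add_apply, ContinuousLinearMap.sub_apply,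
    ContinuousLinearMap.smul_apply, smul_eq_mul, qL_apply, pL_apply]
  ring

lemma diff_Hmode (n : ℕ) {m : ℕ} (j : ℕ) :
    Differentiable ℝ (Hmode n j : Phase m → ℝ) :=
  fun x => (hasFDerivAt_Hmode n j x).differentiableAt

lemma diff_umode (n : ℕ) {m : ℕ} (j : ℕ) :
    Differentiable ℝ (umode n j : Phase m → ℝ) :=
  fun x => (hasFDerivAt_umode n j x).differentiableAt

end FPUaux

namespace FPUaux

section Quad

variable {n j k : ℕ} (hn : 3 ≤ n) (hodd : Odd n)
  (hj1 : 1 ≤ j) (hj2 : j ≤ (n-1)/2) (hk1 : 1 ≤ k) (hk2 : k ≤ (n-1)/2)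

include hn hodd hj1 hj2 hk1 hk2

lemma pb_HH : poissonBracket (Hmode n j) (Hmode n k : Phase (n-1) → ℝ) = 0 := by
  have hmod : n % 2 = 1 := Nat.odd_iff.mp hodd
  funext x
  rw [pb_point (Hmode n j) (Hmode n k) x j (n-j) k (n-k)
    (by omega) (by omega) (by omega) (by omega)
    (qc j x) (pc j x) (qc (n-j) x) (pc (n-j) x)
    (qc k x) (pc k x) (qc (n-k) x) (pc (n-k) x)
    (fun v => fderiv_Hmode n j x v) (fun v => fderiv_Hmode n k x v)]
  have h1 : ¬ (j - 1 = n - k - 1) := by omega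
  have h2 : ¬ (n - j - 1 = k - 1) := by omega
  rcases eq_or_ne j k with rfl | hjk
  · simp [h1, h2]; ring
  · have h3 : ¬ (j - 1 = k - 1) := by omega
    have h4 : ¬ (n - j - 1 = n - k - 1) := by omega
    simp [h1, h2, h3, h4]

lemma pb_Hu : poissonBracket (Hmode n j) (umode n k : Phase (n-1) → ℝ) = 0 := by
  have hmod : n % 2 = 1 := Nat.odd_iff.mp hodd
  funext x
  rw [pb_point (Hmode n j) (umode n k) x j (n-j) k (n-k)
    (by omega) (by omega) (by omega) (by omega)
    (qc j x) (pc j x) (qc (n-j) x) (pc (n-j) x)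
    (pc (n-k) x) (-(qc (n-k) x)) (-(pc k x)) (qc k x)
    (fun v => fderiv_Hmode n j x v) (fun v => fderiv_umode n k x v)]
  have h1 : ¬ (j - 1 = n - k - 1) := by omega
  have h2 : ¬ (n - j - 1 = k - 1) := by omega
  rcases eq_or_ne j k with rfl | hjk
  · simp [h1, h2]; ring
  · have h3 : ¬ (j - 1 = k - 1) := by omega
    have h4 : ¬ (n - j - 1 = n - k - 1) := by omega
    simp [h1, h2, h3, h4]

lemma pb_uu : poissonBracket (umode n j) (umode n k : Phase (n-1) → ℝ) = 0 := by
  have hmod : n % 2 = 1 := Nat.odd_iff.mp hodd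
  funext x
  rw [pb_point (umode n j) (umode n k) x j (n-j) k (n-k)
    (by omega) (by omega) (by omega) (by omega)
    (pc (n-j) x) (-(qc (n-j) x)) (-(pc j x)) (qc j x)
    (pc (n-k) x) (-(qc (n-k) x)) (-(pc k x)) (qc k x)
    (fun v => fderiv_umode n j x v) (fun v => fderiv_umode n k x v)]
  have h1 : ¬ (j - 1 = n - k - 1) := by omega
  have h2 : ¬ (n - j - 1 = k - 1) := by omega
  rcases eq_or_ne j k with rfl | hjk
  · simp [h1, h2]; ring
  · have h3 : ¬ (j - 1 = k - 1) := by omega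
    have h4 : ¬ (n - j - 1 = n - k - 1) := by omega
    simp [h1, h2, h3, h4]

end Quad

lemma pb_antisymm {m : ℕ} (F G : Phase m → ℝ) (x : Phase m) :
    poissonBracket F G x = - poissonBracket G F x := by
  unfold poissonBracket
  rw [← Finset.sum_neg_distrib]
  exact Finset.sum_congr rfl fun i _ => by ring

lemma pb_self {m : ℕ} (F : Phase m → ℝ) : poissonBracket F F = 0 := by
  funext x
  exact Finset.sum_eq_zero fun i _ => by ring

end FPUaux

namespace FPUaux

variable {m : ℕ}

lemma pb_add (f g G : Phase m → ℝ) (x : Phase m)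
    (hf : DifferentiableAt ℝ f x) (hg : DifferentiableAt ℝ g x) :
    poissonBracket (fun y => f y + g y) G x
      = poissonBracket f G x + poissonBracket g G x := by
  unfold poissonBracket
  simp only [fderiv_fun_add hf hg, ContinuousLinearMap.add_apply]
  rw [← Finset.sum_add_distrib]
  exact Finset.sum_congr rfl fun i _ => by ring

lemma pb_sub (f g G : Phase m → ℝ) (x : Phase m)
    (hf : DifferentiableAt ℝ f x) (hg : DifferentiableAt ℝ g x) :
    poissonBracket (fun y => f y - g y) G x
      = poissonBracket f G x - poissonBracket g G x := by
  unfold poissonBracket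
  simp only [fderiv_fun_sub hf hg, ContinuousLinearMap.sub_apply]
  rw [← Finset.sum_sub_distrib]
  exact Finset.sum_congr rfl fun i _ => by ring

lemma pb_const_mul (f G : Phase m → ℝ) (c : ℝ) (x : Phase m)
    (hf : DifferentiableAt ℝ f x) :
    poissonBracket (fun y => c * f y) G x = c * poissonBracket f G x := by
  unfold poissonBracket
  simp only [fderiv_const_mul hf c, ContinuousLinearMap.smul_apply, smul_eq_mul,
    Finset.mul_sum]
  exact Finset.sum_congr rfl fun i _ => by ring

lemma pb_mul (f g G : Phase m → ℝ) (x : Phase m)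
    (hf : DifferentiableAt ℝ f x) (hg : DifferentiableAt ℝ g x) :
    poissonBracket (fun y => f y * g y) G x
      = f x * poissonBracket g G x + g x * poissonBracket f G x := by
  unfold poissonBracket
  simp only [fderiv_fun_mul hf hg, ContinuousLinearMap.add_apply,
    ContinuousLinearMap.smul_apply, smul_eq_mul, Finset.mul_sum]
  rw [← Finset.sum_add_distrib]
  exact Finset.sum_congr rfl fun i _ => by ring

lemma pb_sum {ι : Type*} (s : Finset ι) (f : ι → Phase m → ℝ) (G : Phase m → ℝ)
    (x : Phase m) (hf : ∀ i ∈ s, DifferentiableAt ℝ (f i) x) :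
    poissonBracket (fun y => ∑ i ∈ s, f i y) G x
      = ∑ i ∈ s, poissonBracket (f i) G x := by
  unfold poissonBracket
  simp only [fderiv_fun_sum hf, ContinuousLinearMap.sum_apply, Finset.sum_mul,
    ← Finset.sum_sub_distrib]
  rw [Finset.sum_comm]

end FPUaux

namespace FPUaux

def Ap (n m : ℕ) (y : Phase m) : ℝ :=
  ∑ j ∈ Finset.Icc 1 ((n-1)/2), freq n j * Hmode n j y

def Bp (n m : ℕ) (y : Phase m) : ℝ :=
  ∑ k ∈ Finset.Icc 1 ((n-1)/2), ∑ l ∈ Finset.Ioc k ((n-1)/2),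
    (freq n k * freq n l / 4) * (Hmode n k y * Hmode n l y)

def Cp (n m : ℕ) (y : Phase m) : ℝ :=
  ∑ k ∈ Finset.Icc 1 ((n-1)/2),
    (freq n k ^ 2 / 32) * (3 * (Hmode n k y)^2 - (umode n k y)^2)

lemma Hbar_split (n m : ℕ) :
    (HbarOdd n : Phase m → ℝ)
      = fun y => Ap n m y + (1/(n:ℝ)) * (Bp n m y + Cp n m y) := rfl

/-- If `G` Poisson-commutes with every `H_j` and every `u_j`, it commutes with `H̄`. -/
lemma pb_Hbar (n m : ℕ) (G : Phase m → ℝ)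
    (hH : ∀ j ∈ Finset.Icc 1 ((n-1)/2), poissonBracket (Hmode n j : Phase m → ℝ) G = 0)
    (hu : ∀ j ∈ Finset.Icc 1 ((n-1)/2), poissonBracket (umode n j : Phase m → ℝ) G = 0) :
    poissonBracket (HbarOdd n : Phase m → ℝ) G = 0 := by
  funext x
  have dH : ∀ j : ℕ, DifferentiableAt ℝ (Hmode n j : Phase m → ℝ) x :=
    fun j => (diff_Hmode n j) x
  have du : ∀ j : ℕ, DifferentiableAt ℝ (umode n j : Phase m → ℝ) x :=
    fun j => (diff_umode n j) x
  have dA : DifferentiableAt ℝ (Ap n m) x :=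
    DifferentiableAt.fun_sum fun j _ => (dH j).const_mul _
  have dB : DifferentiableAt ℝ (Bp n m) x :=
    DifferentiableAt.fun_sum fun k _ =>
      DifferentiableAt.fun_sum fun l _ => ((dH k).mul (dH l)).const_mul _
  have dC : DifferentiableAt ℝ (Cp n m) x :=
    DifferentiableAt.fun_sum fun k _ =>
      ((((dH k).pow 2).const_mul (3:ℝ)).sub ((du k).pow 2)).const_mul _
  have hA : poissonBracket (Ap n m) G x = 0 := by
    unfold Ap
    rw [pb_sum (Finset.Icc 1 ((n-1)/2)) (fun j y => freq n j * Hmode n j y) G x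
      (fun j _ => (dH j).const_mul _)]
    refine Finset.sum_eq_zero fun j hj => ?_
    rw [pb_const_mul (Hmode n j) G (freq n j) x (dH j), congrFun (hH j hj) x]
    simp
  have hB : poissonBracket (Bp n m) G x = 0 := by
    unfold Bp
    rw [pb_sum (Finset.Icc 1 ((n-1)/2))
      (fun k y => ∑ l ∈ Finset.Ioc k ((n-1)/2),
        (freq n k * freq n l / 4) * (Hmode n k y * Hmode n l y)) G x
      (fun k _ => DifferentiableAt.fun_sum fun l _ => ((dH k).mul (dH l)).const_mul _)]
    refine Finset.sum_eq_zero fun k hk => ?_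
    rw [pb_sum (Finset.Ioc k ((n-1)/2))
      (fun l y => (freq n k * freq n l / 4) * (Hmode n k y * Hmode n l y)) G x
      (fun l _ => ((dH k).mul (dH l)).const_mul _)]
    refine Finset.sum_eq_zero fun l hl => ?_
    have hl' : l ∈ Finset.Icc 1 ((n-1)/2) := by
      simp only [Finset.mem_Ioc] at hl
      simp only [Finset.mem_Icc] at hk ⊢
      omega
    rw [pb_const_mul (fun y => Hmode n k y * Hmode n l y) G _ x ((dH k).mul (dH l)),
      pb_mul (Hmode n k) (Hmode n l) G x (dH k) (dH l),
      congrFun (hH k hk) x, congrFun (hH l hl') x]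
    simp
  have hC : poissonBracket (Cp n m) G x = 0 := by
    unfold Cp
    rw [pb_sum (Finset.Icc 1 ((n-1)/2))
      (fun k y => (freq n k ^ 2 / 32) * (3 * (Hmode n k y)^2 - (umode n k y)^2)) G x
      (fun k _ => ((((dH k).pow 2).const_mul (3:ℝ)).sub ((du k).pow 2)).const_mul _)]
    refine Finset.sum_eq_zero fun k hk => ?_
    rw [pb_const_mul (fun y => 3 * (Hmode n k y)^2 - (umode n k y)^2) G _ x
      ((((dH k).pow 2).const_mul (3:ℝ)).sub ((du k).pow 2)),
      pb_sub (fun y => 3 * (Hmode n k y)^2) (fun y => (umode n k y)^2) G x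
      (((dH k).pow 2).const_mul (3:ℝ)) ((du k).pow 2),
      pb_const_mul (fun y => (Hmode n k y)^2) G 3 x ((dH k).pow 2)]
    have e1 : (fun y : Phase m => (Hmode n k y)^2)
        = fun y => Hmode n k y * Hmode n k y := by funext y; ring
    have e2 : (fun y : Phase m => (umode n k y)^2)
        = fun y => umode n k y * umode n k y := by funext y; ring
    rw [e1, e2, pb_mul (Hmode n k) (Hmode n k) G x (dH k) (dH k),
      pb_mul (umode n k) (umode n k) G x (du k) (du k),
      congrFun (hH k hk) x, congrFun (hu k hk) x]
    simp
  rw [Hbar_split,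
    pb_add (Ap n m) (fun y => (1/(n:ℝ)) * (Bp n m y + Cp n m y)) G x dA
      ((dB.add dC).const_mul _),
    pb_const_mul (fun y => Bp n m y + Cp n m y) G _ x (dB.add dC),
    pb_add (Bp n m) (Cp n m) G x dB dC, hA, hB, hC]
  simp

end FPUaux

namespace FPUaux

lemma pb_comm_zero {m : ℕ} (F G : Phase m → ℝ) (h : poissonBracket F G = 0) :
    poissonBracket G F = 0 := by
  funext x
  rw [pb_antisymm G F x, congrFun h x]
  simp

end FPUaux

/-- **Proposition 1 of the paper.** For odd `n ≥ 3`, the Birkhoff normal form `H̄`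
of the periodic FPU chain and the quadratic functions `H_j, u_j`
(`1 ≤ j ≤ (n−1)/2`) pairwise Poisson commute; in particular `H̄` admits the
`n − 1` quadratic integrals `H_j, u_j`. -/
theorem odd_fpu_birkhoff_normal_form_integrable
    (n : ℕ) (hn : 3 ≤ n) (hodd : Odd n) :
    ∀ F ∈ oddIntegrals n, ∀ G ∈ oddIntegrals n,
      poissonBracket F G = 0 := by
  open FPUaux in
  have HH : ∀ j k : ℕ, 1 ≤ j → j ≤ (n-1)/2 → 1 ≤ k → k ≤ (n-1)/2 →
      poissonBracket (Hmode n j) (Hmode n k : Phase (n-1) → ℝ) = 0 :=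
    fun j k h1 h2 h3 h4 => pb_HH hn hodd h1 h2 h3 h4
  have Hu : ∀ j k : ℕ, 1 ≤ j → j ≤ (n-1)/2 → 1 ≤ k → k ≤ (n-1)/2 →
      poissonBracket (Hmode n j) (umode n k : Phase (n-1) → ℝ) = 0 :=
    fun j k h1 h2 h3 h4 => pb_Hu hn hodd h1 h2 h3 h4
  have uu : ∀ j k : ℕ, 1 ≤ j → j ≤ (n-1)/2 → 1 ≤ k → k ≤ (n-1)/2 →
      poissonBracket (umode n j) (umode n k : Phase (n-1) → ℝ) = 0 :=
    fun j k h1 h2 h3 h4 => pb_uu hn hodd h1 h2 h3 h4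
  have hbarH : ∀ k : ℕ, 1 ≤ k → k ≤ (n-1)/2 →
      poissonBracket (HbarOdd n) (Hmode n k : Phase (n-1) → ℝ) = 0 := by
    intro k h1 h2
    refine pb_Hbar n (n-1) (Hmode n k) ?_ ?_
    · intro j hj
      rw [Finset.mem_Icc] at hj
      exact HH j k hj.1 hj.2 h1 h2
    · intro j hj
      rw [Finset.mem_Icc] at hj
      exact pb_comm_zero _ _ (Hu k j h1 h2 hj.1 hj.2)
  have hbaru : ∀ k : ℕ, 1 ≤ k → k ≤ (n-1)/2 →
      poissonBracket (HbarOdd n) (umode n k : Phase (n-1) → ℝ) = 0 := by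
    intro k h1 h2
    refine pb_Hbar n (n-1) (umode n k) ?_ ?_
    · intro j hj
      rw [Finset.mem_Icc] at hj
      exact Hu j k hj.1 hj.2 h1 h2
    · intro j hj
      rw [Finset.mem_Icc] at hj
      exact uu j k hj.1 hj.2 h1 h2
  rintro F ((hF | ⟨j, ⟨hj1, hj2⟩, rfl⟩) | ⟨j, ⟨hj1, hj2⟩, rfl⟩) G
    ((hG | ⟨k, ⟨hk1, hk2⟩, rfl⟩) | ⟨k, ⟨hk1, hk2⟩, rfl⟩) <;>
    try rw [Set.mem_singleton_iff] at hF
  all_goals try rw [Set.mem_singleton_iff] at hG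
  all_goals try subst hF
  all_goals try subst hG
  · exact pb_self _
  · exact hbarH k hk1 hk2
  · exact hbaru k hk1 hk2
  · exact pb_comm_zero _ _ (hbarH j hj1 hj2)
  · exact HH j k hj1 hj2 hk1 hk2
  · exact Hu j k hj1 hj2 hk1 hk2
  · exact pb_comm_zero _ _ (hbaru j hj1 hj2)
  · exact pb_comm_zero _ _ (Hu k j hk1 hk2 hj1 hj2)
  · exact uu j k hj1 hj2 hk1 hk2
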